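/- Let c(t₁,…,tₙ) ≈ d(s₁,…,s_m) be a well-typed strongly regular equation, and let c(t'₁,…,t'ₙ) → d(s₁,…,s_m) ⇐ C₁ be a rule obtained by linearization of the axiom (each occurrence of a repeated variable x in c(t₁,…,tₙ) beyond the first is replaced by a fresh variable y, adding the condition x == y to C₁). Then there exist an environment V and variants c : (τ₁,…,τₙ) → τ and d : (τ'₁,…,τ'_m) → τ of the principal types of c and d such that c(t'₁,…,t'ₙ), d(s₁,…,s_m) ∈ Term^τ_Σ(V) and every condition of C₁ is well-typed w.r.t. V (its two sides share a type in V). -/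

import Mathlib

namespace ACRWL

/-- Partial expressions: data variables, bottom, data constructor applications
and defined function applications (symbols named by natural numbers). -/
inductive Expr : Type where
  | var : ℕ → Expr
  | bot : Expr
  | con : ℕ → List Expr → Expr
  | fn  : ℕ → List Expr → Expr

namespace Expr

/-- Occurrence of a data variable in an expression. -/
inductive Occurs (x : ℕ) : Expr → Prop where
  | var : Occurs x (var x)
  | con {c : ℕ} {es : List Expr} {e : Expr} : e ∈ es → Occurs x e → Occurs x (con c es)
  | fn {f : ℕ} {es : List Expr} {e : Expr} : e ∈ es → Occurs x e → Occurs x (fn f es)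

/-- Partial data terms: built from variables, ⊥ and data constructors only. -/
inductive IsTerm : Expr → Prop where
  | var (x : ℕ) : IsTerm (var x)
  | bot : IsTerm bot
  | con {c : ℕ} {es : List Expr} : (∀ e ∈ es, IsTerm e) → IsTerm (con c es)

/-- Total expressions: no occurrence of ⊥. -/
inductive NoBot : Expr → Prop where
  | var (x : ℕ) : NoBot (var x)
  | con {c : ℕ} {es : List Expr} : (∀ e ∈ es, NoBot e) → NoBot (con c es)
  | fn {f : ℕ} {es : List Expr} : (∀ e ∈ es, NoBot e) → NoBot (fn f es)

/-- Total data terms. -/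
def IsTotalTerm (e : Expr) : Prop := IsTerm e ∧ NoBot e

/-- Application of a data substitution. -/
def subst (σ : ℕ → Expr) : Expr → Expr
  | var x => σ x
  | bot => bot
  | con c es => con c (es.attach.map fun e => subst σ e.1)
  | fn f es => fn f (es.attach.map fun e => subst σ e.1)
termination_by e => sizeOf e
decreasing_by
  all_goals (simp only [Expr.con.sizeOf_spec, Expr.fn.sizeOf_spec]; have := List.sizeOf_lt_of_mem e.2; omega)

/-- Number of occurrences of the variable `x`. -/
def varCount (x : ℕ) : Expr → ℕ
  | var y => if y = x then 1 else 0
  | bot => 0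
  | con _ es => (es.attach.map fun e => varCount x e.1).sum
  | fn _ es => (es.attach.map fun e => varCount x e.1).sum
termination_by e => sizeOf e
decreasing_by
  all_goals (simp only [Expr.con.sizeOf_spec, Expr.fn.sizeOf_spec]; have := List.sizeOf_lt_of_mem e.2; omega)

end Expr

/-- A set of equational axioms between (total data) terms. -/
abbrev Axioms := Set (Expr × Expr)

/-- A data substitution mapping every variable to a partial data term. -/
def TermSub (σ : ℕ → Expr) : Prop := ∀ x, (σ x).IsTerm

/-- `σ` is safe for `t`: variables occurring more than once in `t`
are mapped to total data terms. -/
def SafeSub (σ : ℕ → Expr) (t : Expr) : Prop :=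
  ∀ x, 2 ≤ Expr.varCount x t → Expr.IsTotalTerm (σ x)

/-- Well-formed set of equational axioms: a finite set of equations between
total data terms. -/
def WfAxioms (C : Axioms) : Prop :=
  C.Finite ∧ ∀ p ∈ C, Expr.IsTotalTerm p.1 ∧ Expr.IsTotalTerm p.2

/-- `[C]_⊒` : the instances of the axioms of `C`, read in both directions,
under safe partial data substitutions. -/
def CInstances (C : Axioms) : Set (Expr × Expr) :=
  { q | ∃ p ∈ C, ∃ σ : ℕ → Expr, TermSub σ ∧
      ((SafeSub σ p.1 ∧ q = (p.1.subst σ, p.2.subst σ)) ∨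
       (SafeSub σ p.2 ∧ q = (p.2.subst σ, p.1.subst σ))) }

/-- Every axiom is regular : both sides have the same data variables. -/
def RegularAxioms (C : Axioms) : Prop :=
  ∀ p ∈ C, ∀ x, Expr.Occurs x p.1 ↔ Expr.Occurs x p.2

/-- Every axiom is non-collapsing : neither side is a variable. -/
def NonCollapsing (C : Axioms) : Prop :=
  ∀ p ∈ C, (∀ x, p.1 ≠ Expr.var x) ∧ (∀ x, p.2 ≠ Expr.var x)

/-- Strongly regular set of axioms. -/
def StronglyRegular (C : Axioms) : Prop := RegularAxioms C ∧ NonCollapsing C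

/-- The inequational calculus associated to `C`, deriving approximation
inequalities `s ⊒ t` between partial data terms. -/
inductive Geq (C : Axioms) : Expr → Expr → Prop where
  | bot {t : Expr} : t.IsTerm → Geq C t Expr.bot
  | refl {t : Expr} : t.IsTerm → Geq C t t
  | trans {t t' t'' : Expr} : Geq C t t' → Geq C t' t'' → Geq C t t''
  | mono {c : ℕ} {ts ss : List Expr} : ts.length = ss.length →
      (∀ p ∈ ts.zip ss, Geq C p.1 p.2) → Geq C (Expr.con c ts) (Expr.con c ss)
  | ax {s t : Expr} : (s, t) ∈ CInstances C → Geq C s t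

/-- `s ≈_C t` iff `s ⊒_C t` and `t ⊒_C s`. -/
def EqC (C : Axioms) (s t : Expr) : Prop := Geq C s t ∧ Geq C t s

end ACRWL

namespace ACRWL

/-- A defining rule `f(t₁,…,tₙ) → r ⇐ a₁ == b₁, …, a_m == b_m`. -/
structure Rule : Type where
  fname : ℕ
  lhs : List Expr
  rhs : Expr
  conds : List (Expr × Expr)

/-- Application of a data substitution to a defining rule. -/
def Rule.subst (σ : ℕ → Expr) (ρ : Rule) : Rule :=
  ⟨ρ.fname, ρ.lhs.map (Expr.subst σ), ρ.rhs.subst σ,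
    ρ.conds.map fun p => (p.1.subst σ, p.2.subst σ)⟩

/-- A linear tuple of terms: no variable occurs more than once in the tuple. -/
def Linear (ts : List Expr) : Prop := ∀ x : ℕ, (ts.map (Expr.varCount x)).sum ≤ 1

/-- Well-formed defining rule: linear left-hand side made of total data
terms; total right-hand side and conditions. -/
def WfRule (ρ : Rule) : Prop :=
  Linear ρ.lhs ∧ (∀ t ∈ ρ.lhs, Expr.IsTotalTerm t) ∧ ρ.rhs.NoBot ∧
  ∀ p ∈ ρ.conds, p.1.NoBot ∧ p.2.NoBot

/-- A program: a finite set of equational axioms for constructors together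
with a finite set of defining rules for functions. -/
structure Program : Type where
  C : Axioms
  R : Set Rule
  wfC : WfAxioms C
  finR : R.Finite
  wfR : ∀ ρ ∈ R, WfRule ρ

/-- `[R]_→` : all instances of rules of the program under
partial data substitutions. -/
def RInstances (P : Program) : Set Rule :=
  { ρ' | ∃ ρ ∈ P.R, ∃ σ : ℕ → Expr, TermSub σ ∧ ρ' = ρ.subst σ }

/-- Statements derived by the rewriting calculi: reduction/approximation
statements `e → e'` and joinability statements `e == e'`. -/
inductive Stm : Type where
  | red : Expr → Expr → Stm
  | join : Expr → Expr → Stm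

/-- The Basic Rewriting Calculus (BRC) of a program. -/
inductive BRC (P : Program) : Stm → Prop where
  | bot (e : Expr) : BRC P (Stm.red e Expr.bot)
  | refl (e : Expr) : BRC P (Stm.red e e)
  | trans {e e' e'' : Expr} :
      BRC P (Stm.red e e') → BRC P (Stm.red e' e'') → BRC P (Stm.red e e'')
  | monoCon {c : ℕ} {es es' : List Expr} : es.length = es'.length →
      (∀ p ∈ es.zip es', BRC P (Stm.red p.1 p.2)) →
      BRC P (Stm.red (Expr.con c es) (Expr.con c es'))
  | monoFn {f : ℕ} {es es' : List Expr} : es.length = es'.length →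
      (∀ p ∈ es.zip es', BRC P (Stm.red p.1 p.2)) →
      BRC P (Stm.red (Expr.fn f es) (Expr.fn f es'))
  | rule {ρ : Rule} : ρ ∈ RInstances P →
      (∀ p ∈ ρ.conds, BRC P (Stm.join p.1 p.2)) →
      BRC P (Stm.red (Expr.fn ρ.fname ρ.lhs) ρ.rhs)
  | mut {s t : Expr} : (s, t) ∈ CInstances P.C → BRC P (Stm.red s t)
  | join {e e' t : Expr} : t.IsTotalTerm →
      BRC P (Stm.red e t) → BRC P (Stm.red e' t) → BRC P (Stm.join e e')

/-- The Goal-Oriented Rewriting Calculus (GORC) of a program. -/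
inductive GORC (P : Program) : Stm → Prop where
  | bot (e : Expr) : GORC P (Stm.red e Expr.bot)
  | rrefl (x : ℕ) : GORC P (Stm.red (Expr.var x) (Expr.var x))
  | dc {c : ℕ} {es ts : List Expr} : es.length = ts.length →
      (∀ p ∈ es.zip ts, GORC P (Stm.red p.1 p.2)) →
      GORC P (Stm.red (Expr.con c es) (Expr.con c ts))
  | omut {c : ℕ} {es ts : List Expr} {s t : Expr} : t ≠ Expr.bot →
      (Expr.con c ts, s) ∈ CInstances P.C → es.length = ts.length →
      (∀ p ∈ es.zip ts, GORC P (Stm.red p.1 p.2)) →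
      GORC P (Stm.red s t) → GORC P (Stm.red (Expr.con c es) t)
  | orule {es : List Expr} {ρ : Rule} {t : Expr} : t ≠ Expr.bot →
      ρ ∈ RInstances P → es.length = ρ.lhs.length →
      (∀ p ∈ es.zip ρ.lhs, GORC P (Stm.red p.1 p.2)) →
      (∀ p ∈ ρ.conds, GORC P (Stm.join p.1 p.2)) →
      GORC P (Stm.red ρ.rhs t) → GORC P (Stm.red (Expr.fn ρ.fname es) t)
  | join {e e' t : Expr} : t.IsTotalTerm →
      GORC P (Stm.red e t) → GORC P (Stm.red e' t) → GORC P (Stm.join e e')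

end ACRWL

namespace ACRWL

/-- Polymorphic types built from type variables and type constructors. -/
inductive Ty : Type where
  | tvar : ℕ → Ty
  | tcon : ℕ → List Ty → Ty

namespace Ty

/-- Occurrence of a type variable in a type. -/
inductive OccursT (α : ℕ) : Ty → Prop where
  | tvar : OccursT α (tvar α)
  | tcon {K : ℕ} {τs : List Ty} {τ : Ty} : τ ∈ τs → OccursT α τ → OccursT α (tcon K τs)

/-- Application of a type substitution. -/
def subst (σ : ℕ → Ty) : Ty → Ty
  | tvar α => σ α
  | tcon K τs => tcon K (τs.attach.map fun τ => subst σ τ.1)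
termination_by τ => sizeOf τ
decreasing_by
  all_goals (simp only [Ty.tcon.sizeOf_spec]; have := List.sizeOf_lt_of_mem τ.2; omega)

end Ty

/-- A principal type declaration `(τ₁,…,τₙ) → τ`. -/
structure Decl : Type where
  args : List Ty
  res : Ty

/-- Transparency: every type variable of the argument types occurs in the
result type. -/
def Decl.Transparent (d : Decl) : Prop :=
  ∀ α : ℕ, (∃ τ ∈ d.args, Ty.OccursT α τ) → Ty.OccursT α d.res

/-- Instance of a declaration under a type substitution. -/
def Decl.substT (σt : ℕ → Ty) (d : Decl) : Decl :=
  ⟨d.args.map (Ty.subst σt), d.res.subst σt⟩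

/-- A variant of a declaration: a renaming of its type variables. -/
def IsVariant (d d' : Decl) : Prop :=
  ∃ ρ : ℕ → ℕ, Function.Injective ρ ∧ d' = d.substT (fun α => Ty.tvar (ρ α))

/-- A polymorphic signature: (optional) principal type declarations for data
constructors and for defined function symbols, the former transparent. -/
structure Signature : Type where
  dc : ℕ → Option Decl
  fs : ℕ → Option Decl
  dc_trans : ∀ c d, dc c = some d → Decl.Transparent d

/-- An environment: at most one type annotation per data variable. -/
abbrev Env := ℕ → Option Ty

/-- Instance of an environment under a type substitution. -/
def Env.substT (V : Env) (σt : ℕ → Ty) : Env := fun x => (V x).map (Ty.subst σt)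

/-- The type inference system: `HasType Sg V e τ` is the judgement
`V ⊢_{Σ⊥} e : τ`.  The symbol `⊥` has principal type `⊥ : → α`, hence
every type is an admissible instance for it. -/
inductive HasType (Sg : Signature) (V : Env) : Expr → Ty → Prop where
  | var {x : ℕ} {τ : Ty} : V x = some τ → HasType Sg V (Expr.var x) τ
  | bot (τ : Ty) : HasType Sg V Expr.bot τ
  | con {c : ℕ} {es : List Expr} {d : Decl} {σt : ℕ → Ty} :
      Sg.dc c = some d → es.length = d.args.length →
      (∀ p ∈ es.zip d.args, HasType Sg V p.1 (Ty.subst σt p.2)) →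
      HasType Sg V (Expr.con c es) (Ty.subst σt d.res)
  | fn {f : ℕ} {es : List Expr} {d : Decl} {σt : ℕ → Ty} :
      Sg.fs f = some d → es.length = d.args.length →
      (∀ p ∈ es.zip d.args, HasType Sg V p.1 (Ty.subst σt p.2)) →
      HasType Sg V (Expr.fn f es) (Ty.subst σt d.res)

/-- Occurrence of a function symbol in an expression. -/
inductive FnOccurs (f : ℕ) : Expr → Prop where
  | head {es : List Expr} : FnOccurs f (Expr.fn f es)
  | con {c : ℕ} {es : List Expr} {e : Expr} : e ∈ es → FnOccurs f e → FnOccurs f (Expr.con c es)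
  | fn {g : ℕ} {es : List Expr} {e : Expr} : e ∈ es → FnOccurs f e → FnOccurs f (Expr.fn g es)

end ACRWL

namespace ACRWL

/-- A regular defining rule: every variable of the right-hand side occurs in
the left-hand side. -/
def RegularRule (ρ : Rule) : Prop :=
  ∀ x : ℕ, Expr.Occurs x ρ.rhs → ∃ t ∈ ρ.lhs, Expr.Occurs x t

/-- A well-typed (regular) defining rule for `f : (τ₁,…,τₙ) → τ`: in some
environment the left-hand side arguments have the declared argument types,
the right-hand side has the declared result type, and the two sides of every
condition share a type. -/
def WellTypedRule (Sg : Signature) (ρ : Rule) : Prop :=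
  ∃ d : Decl, Sg.fs ρ.fname = some d ∧ ρ.lhs.length = d.args.length ∧
    ∃ V : Env,
      (∀ p ∈ ρ.lhs.zip d.args, HasType Sg V p.1 p.2) ∧
      HasType Sg V ρ.rhs d.res ∧
      ∀ p ∈ ρ.conds, ∃ τ : Ty, HasType Sg V p.1 τ ∧ HasType Sg V p.2 τ

/-- A well-typed strongly regular equational axiom
`c(t₁,…,tₙ) ≈ d(s₁,…,s_m)`: the principal types of `c` and `d` admit
variants with a common result type `τ` such that both sides have type `τ`
in some environment. -/
def WellTypedAxiom (Sg : Signature) (p : Expr × Expr) : Prop :=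
  ∃ (c : ℕ) (ts : List Expr) (d : ℕ) (ss : List Expr)
      (τs τs' : List Ty) (τ : Ty),
    p.1 = Expr.con c ts ∧ p.2 = Expr.con d ss ∧
    (∃ D, Sg.dc c = some D ∧ IsVariant D ⟨τs, τ⟩) ∧
    (∃ D, Sg.dc d = some D ∧ IsVariant D ⟨τs', τ⟩) ∧
    ∃ V : Env, HasType Sg V p.1 τ ∧ HasType Sg V p.2 τ

/-- A well-typed strongly regular program. -/
def WellTypedProgram (Sg : Signature) (P : Program) : Prop :=
  StronglyRegular P.C ∧
  (∀ p ∈ P.C, WellTypedAxiom Sg p) ∧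
  (∀ ρ ∈ P.R, RegularRule ρ ∧ WellTypedRule Sg ρ)

end ACRWL

namespace ACRWL

/-- `ts'` and `C₁` are obtained from the left-hand side `c(t₁,…,tₙ)` of the
axiom `c(t₁,…,tₙ) ≈ d(s₁,…,s_m)` by linearization: every occurrence of a
repeated variable `x` beyond the first is replaced by a fresh variable `y`
(recorded by the renaming-back map `θ`), adding the condition `x == y` to
`C₁`. -/
def IsLinearization (c : ℕ) (ts : List Expr) (d : ℕ) (ss : List Expr)
    (ts' : List Expr) (C₁ : List (Expr × Expr)) : Prop :=
  ∃ θ : ℕ → ℕ,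
    (∀ x, Expr.Occurs x (Expr.con c ts) → θ x = x) ∧
    (∀ y, θ y ≠ y →
        ¬ Expr.Occurs y (Expr.con c ts) ∧ ¬ Expr.Occurs y (Expr.con d ss) ∧
        Expr.Occurs (θ y) (Expr.con c ts)) ∧
    ts = ts'.map (Expr.subst fun y => Expr.var (θ y)) ∧
    Linear ts' ∧
    (∀ a b : Expr, (a, b) ∈ C₁ ↔
        ∃ y, Expr.Occurs y (Expr.con c ts') ∧ θ y ≠ y ∧
          a = Expr.var (θ y) ∧ b = Expr.var y)

theorem Expr.subst_con (σ : ℕ → Expr) (c : ℕ) (es : List Expr) :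
    Expr.subst σ (Expr.con c es) = Expr.con c (es.map (Expr.subst σ)) := by
  rw [Expr.subst]
  simp [List.attach_map_val]

theorem Expr.subst_fn (σ : ℕ → Expr) (f : ℕ) (es : List Expr) :
    Expr.subst σ (Expr.fn f es) = Expr.fn f (es.map (Expr.subst σ)) := by
  rw [Expr.subst]
  simp [List.attach_map_val]

theorem mem_zip_of_mem_left {α β : Type*} {a : α} {l : List α} {l' : List β}
    (h : a ∈ l) (hlen : l.length = l'.length) : ∃ b, (a, b) ∈ l.zip l' := by
  obtain ⟨i, hi, rfl⟩ := List.mem_iff_getElem.mp h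
  have hi' : i < l'.length := hlen ▸ hi
  exact ⟨l'[i], List.mem_iff_getElem.mpr ⟨i, by simp; omega, by simp⟩⟩

/-- Typing lifts backwards along a renaming substitution. -/
theorem hasType_of_subst_ren (Sg : Signature) (V₀ : Env) (θ : ℕ → ℕ) :
    ∀ e τ, HasType Sg V₀ (e.subst fun y => Expr.var (θ y)) τ →
      HasType Sg (fun y => V₀ (θ y)) e τ := by
  intro e
  induction e using Expr.subst.induct with
  | case1 x =>
    intro τ h
    rw [Expr.subst] at h
    cases h with
    | var h => exact HasType.var h
  | case2 =>
    intro τ h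
    exact HasType.bot τ
  | case3 c es ih =>
    intro τ h
    rw [Expr.subst_con] at h
    cases h with
    | con hd hlen hargs =>
      rename_i D σt
      refine HasType.con hd (by simpa using hlen) ?_
      intro p hp
      obtain ⟨hp1, hp2⟩ := List.of_mem_zip hp
      have hmem : (p.1.subst fun y => Expr.var (θ y), p.2) ∈
          (es.map (Expr.subst fun y => Expr.var (θ y))).zip D.args := by
        rw [List.zip_map_left]
        exact List.mem_map.mpr ⟨p, hp, rfl⟩
      exact ih ⟨p.1, hp1⟩ _ (hargs _ hmem)
  | case4 f es ih =>
    intro τ h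
    rw [Expr.subst_fn] at h
    cases h with
    | fn hd hlen hargs =>
      rename_i D σt
      refine HasType.fn hd (by simpa using hlen) ?_
      intro p hp
      obtain ⟨hp1, hp2⟩ := List.of_mem_zip hp
      have hmem : (p.1.subst fun y => Expr.var (θ y), p.2) ∈
          (es.map (Expr.subst fun y => Expr.var (θ y))).zip D.args := by
        rw [List.zip_map_left]
        exact List.mem_map.mpr ⟨p, hp, rfl⟩
      exact ih ⟨p.1, hp1⟩ _ (hargs _ hmem)

/-- Typing depends only on the environment at the occurring variables. -/
theorem hasType_congr (Sg : Signature) {V : Env} {e : Expr} {τ : Ty}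
    (h : HasType Sg V e τ) :
    ∀ V' : Env, (∀ x, Expr.Occurs x e → V x = V' x) → HasType Sg V' e τ := by
  induction h with
  | var hx =>
    intro V' hV'
    exact HasType.var ((hV' _ Expr.Occurs.var) ▸ hx)
  | bot τ => intro V' _; exact HasType.bot τ
  | con hd hlen _ ih =>
    intro V' hV'
    refine HasType.con hd hlen ?_
    intro p hp
    exact ih p hp V' fun x hx =>
      hV' x (Expr.Occurs.con (List.of_mem_zip hp).1 hx)
  | fn hd hlen _ ih =>
    intro V' hV'
    refine HasType.fn hd hlen ?_
    intro p hp
    exact ih p hp V' fun x hx =>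
      hV' x (Expr.Occurs.fn (List.of_mem_zip hp).1 hx)

/-- Variables occurring in a typable expression are annotated. -/
theorem occurs_typed (Sg : Signature) {V : Env} {e : Expr} {τ : Ty} {x : ℕ}
    (h : HasType Sg V e τ) (hx : Expr.Occurs x e) : ∃ τ', V x = some τ' := by
  induction h with
  | var hx' => cases hx; exact ⟨_, hx'⟩
  | bot τ => cases hx
  | con hd hlen hargs ih =>
    cases hx with
    | con hmem hocc =>
      obtain ⟨b, hb⟩ := mem_zip_of_mem_left hmem hlen
      exact ih _ hb hocc
  | fn hd hlen hargs ih =>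
    cases hx with
    | fn hmem hocc =>
      obtain ⟨b, hb⟩ := mem_zip_of_mem_left hmem hlen
      exact ih _ hb hocc

/-- Total-term-ness lifts backwards along a renaming substitution. -/
theorem isTotalTerm_of_subst_ren (θ : ℕ → ℕ) :
    ∀ e : Expr, Expr.IsTotalTerm (e.subst fun y => Expr.var (θ y)) →
      Expr.IsTotalTerm e := by
  intro e
  induction e using Expr.subst.induct with
  | case1 x => exact fun _ => ⟨Expr.IsTerm.var x, Expr.NoBot.var x⟩
  | case2 =>
    intro h
    rw [Expr.subst] at h
    exact h
  | case3 c es ih =>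
    intro h
    rw [Expr.subst_con] at h
    obtain ⟨h1, h2⟩ := h
    cases h1 with
    | con h1 =>
      cases h2 with
      | con h2 =>
        refine ⟨Expr.IsTerm.con fun t ht => ?_, Expr.NoBot.con fun t ht => ?_⟩
        · exact (ih ⟨t, ht⟩ ⟨h1 _ (List.mem_map.mpr ⟨t, ht, rfl⟩),
            h2 _ (List.mem_map.mpr ⟨t, ht, rfl⟩)⟩).1
        · exact (ih ⟨t, ht⟩ ⟨h1 _ (List.mem_map.mpr ⟨t, ht, rfl⟩),
            h2 _ (List.mem_map.mpr ⟨t, ht, rfl⟩)⟩).2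
  | case4 f es ih =>
    intro h
    rw [Expr.subst_fn] at h
    exact absurd h.1 (by intro hc; cases hc)

/-- Proposition 6.2 (preservation of well-typedness by linearization): if
`c(t₁,…,tₙ) ≈ d(s₁,…,s_m)` is a well-typed strongly regular equation and
`c(t'₁,…,t'ₙ) → d(s₁,…,s_m) ⇐ C₁` is a rule obtained by linearizing it,
then there are an environment `V` and variants `c : (τ₁,…,τₙ) → τ`,
`d : (τ'₁,…,τ'_m) → τ` of the principal types of `c` and `d` such that
`c(t'₁,…,t'ₙ), d(s₁,…,s_m) ∈ Term^τ_Σ(V)` and every condition of `C₁` is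
well-typed w.r.t. `V`. -/
theorem linearization_well_typed (Sg : Signature)
    (c : ℕ) (ts : List Expr) (d : ℕ) (ss : List Expr)
    (htot : (∀ t ∈ ts, Expr.IsTotalTerm t) ∧ (∀ s ∈ ss, Expr.IsTotalTerm s))
    (hreg : ∀ x, Expr.Occurs x (Expr.con c ts) ↔ Expr.Occurs x (Expr.con d ss))
    (hwt : WellTypedAxiom Sg (Expr.con c ts, Expr.con d ss))
    (ts' : List Expr) (C₁ : List (Expr × Expr))
    (hlin : IsLinearization c ts d ss ts' C₁) :
    ∃ (V : Env) (τs τs' : List Ty) (τ : Ty),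
      (∃ D, Sg.dc c = some D ∧ IsVariant D ⟨τs, τ⟩) ∧
      (∃ D, Sg.dc d = some D ∧ IsVariant D ⟨τs', τ⟩) ∧
      (HasType Sg V (Expr.con c ts') τ ∧ Expr.IsTotalTerm (Expr.con c ts')) ∧
      (HasType Sg V (Expr.con d ss) τ ∧ Expr.IsTotalTerm (Expr.con d ss)) ∧
      (∀ p ∈ C₁, ∃ τc : Ty, HasType Sg V p.1 τc ∧ HasType Sg V p.2 τc) := by
  obtain ⟨c₀, ts₀, d₀, ss₀, τs, τs', τ, h1, h2, hvc, hvd, V₀, ht1, ht2⟩ := hwt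
  simp only at h1 h2 ht1 ht2
  obtain ⟨hc, hts⟩ : c₀ = c ∧ ts₀ = ts := by
    constructor <;> injection h1.symm
  subst hc hts
  obtain ⟨hd, hss⟩ : d₀ = d ∧ ss₀ = ss := by
    constructor <;> injection h2.symm
  subst hd hss
  obtain ⟨θ, hfix, hfresh, hmap, hlinear, hC⟩ := hlin
  refine ⟨fun y => V₀ (θ y), τs, τs', τ, hvc, hvd, ⟨?_, ?_⟩, ⟨?_, ?_⟩, ?_⟩
  · -- typing of con c ts'
    have heq : (Expr.con c₀ ts').subst (fun y => Expr.var (θ y)) = Expr.con c₀ ts₀ := by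
      rw [Expr.subst_con, ← hmap]
    exact hasType_of_subst_ren Sg V₀ θ _ τ (heq ▸ ht1)
  · -- totality of con c ts'
    refine ⟨Expr.IsTerm.con fun t ht => ?_, Expr.NoBot.con fun t ht => ?_⟩
    all_goals
      have hmem : t.subst (fun y => Expr.var (θ y)) ∈ ts₀ := by
        rw [hmap]; exact List.mem_map.mpr ⟨t, ht, rfl⟩
      have htt := isTotalTerm_of_subst_ren θ t (htot.1 _ hmem)
    · exact htt.1
    · exact htt.2
  · -- typing of con d ss
    refine hasType_congr Sg ht2 _ fun x hx => ?_
    have hocc : Expr.Occurs x (Expr.con c₀ ts₀) := (hreg x).mpr hx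
    rw [hfix x hocc]
  · -- totality of con d ss
    exact ⟨Expr.IsTerm.con fun s hs => (htot.2 s hs).1,
      Expr.NoBot.con fun s hs => (htot.2 s hs).2⟩
  · -- conditions
    intro p hp
    obtain ⟨y, hyocc, hyne, ha, hb⟩ := (hC p.1 p.2).mp (by simpa using hp)
    have hθocc : Expr.Occurs (θ y) (Expr.con c₀ ts₀) := (hfresh y hyne).2.2
    obtain ⟨τc, hτc⟩ := occurs_typed Sg ht1 hθocc
    refine ⟨τc, ?_, ?_⟩
    · rw [ha]
      refine HasType.var ?_
      show V₀ (θ (θ y)) = some τc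
      rw [hfix _ hθocc]; exact hτc
    · rw [hb]
      exact HasType.var (by simpa using hτc)

end ACRWL
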